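/- Let α > 1 be a real number. The function f(λ) = ((1−λ)/(1+λ)) · ((1+λ^α)/(1−λ^α)) is nonnegative and strictly decreasing on [0,1). -/

import Mathlib

lemma k_pos (α : ℝ) (hα : 1 < α) {x : ℝ} (hx0 : 0 < x) (hx1 : x < 1) :
    0 < (α - 1) + 2 * x ^ (α + 1) - (α + 1) * x ^ 2 := by
  have hanti : StrictAntiOn (fun x : ℝ => (α - 1) + 2 * x ^ (α + 1) - (α + 1) * x ^ 2)
      (Set.Ioc 0 1) := by
    apply strictAntiOn_of_deriv_neg (convex_Ioc 0 1)
    · apply ContinuousOn.sub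
      · exact continuousOn_const.add
          (continuousOn_const.mul (continuousOn_id.rpow_const (fun y (hy : y ∈ Set.Ioc (0:ℝ) 1) => Or.inl (ne_of_gt hy.1))))
      · exact continuousOn_const.mul (continuousOn_pow 2)
    · intro y hy
      rw [interior_Ioc] at hy
      have hy0 : 0 < y := hy.1
      have hy1 : y < 1 := hy.2
      have d : HasDerivAt (fun x : ℝ => (α - 1) + 2 * x ^ (α + 1) - (α + 1) * x ^ 2)
          (2 * ((α + 1) * y ^ (α + 1 - 1)) - (α + 1) * (2 * y ^ 1)) y := by
        have d1 : HasDerivAt (fun x : ℝ => x ^ (α + 1)) ((α + 1) * y ^ (α + 1 - 1)) y :=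
          Real.hasDerivAt_rpow_const (Or.inl hy0.ne')
        have d2 : HasDerivAt (fun x : ℝ => x ^ 2) (2 * y ^ 1) y := by
          simpa using hasDerivAt_pow 2 y
        exact ((d1.const_mul 2).const_add (α - 1)).sub (d2.const_mul (α + 1))
      rw [d.deriv]
      have hpow : y ^ (α + 1 - 1) < y := by
        have : y ^ (α + 1 - 1) < y ^ (1 : ℝ) :=
          Real.rpow_lt_rpow_of_exponent_gt hy0 hy1 (by linarith)
        simpa using this
      have : 0 < α + 1 := by linarith
      nlinarith [mul_pos this (sub_pos.mpr hpow)]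
  have h1 := hanti ⟨hx0, hx1.le⟩ ⟨zero_lt_one, le_refl 1⟩ hx1
  have e1 : ((1:ℝ)) ^ (α + 1) = 1 := Real.one_rpow _
  simp only [e1, one_pow] at h1
  linarith

lemma h_pos (α : ℝ) (hα : 1 < α) {x : ℝ} (hx0 : 0 < x) (hx1 : x < 1) :
    0 < 1 - x ^ (2 * α) - α * x ^ (α - 1) * (1 - x ^ 2) := by
  have hanti : StrictAntiOn (fun x : ℝ => 1 - x ^ (2 * α) - α * x ^ (α - 1) * (1 - x ^ 2))
      (Set.Ioc 0 1) := by
    apply strictAntiOn_of_deriv_neg (convex_Ioc 0 1)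
    · apply ContinuousOn.sub
      · exact continuousOn_const.sub
          (continuousOn_id.rpow_const (fun y (hy : y ∈ Set.Ioc (0:ℝ) 1) => Or.inl (ne_of_gt hy.1)))
      · exact (continuousOn_const.mul (continuousOn_id.rpow_const (fun y (hy : y ∈ Set.Ioc (0:ℝ) 1) => Or.inl (ne_of_gt hy.1)))).mul
          (continuousOn_const.sub (continuousOn_pow 2))
    · intro y hy
      rw [interior_Ioc] at hy
      have hy0 : 0 < y := hy.1
      have hy1 : y < 1 := hy.2
      have d1 : HasDerivAt (fun x : ℝ => x ^ (2 * α)) ((2 * α) * y ^ (2 * α - 1)) y :=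
        Real.hasDerivAt_rpow_const (Or.inl hy0.ne')
      have d2 : HasDerivAt (fun x : ℝ => x ^ (α - 1)) ((α - 1) * y ^ (α - 1 - 1)) y :=
        Real.hasDerivAt_rpow_const (Or.inl hy0.ne')
      have d3 : HasDerivAt (fun x : ℝ => 1 - x ^ 2) (-(2 * y ^ 1)) y := by
        simpa using (hasDerivAt_pow 2 y).const_sub 1
      have d : HasDerivAt (fun x : ℝ => 1 - x ^ (2 * α) - α * x ^ (α - 1) * (1 - x ^ 2))
          (-((2 * α) * y ^ (2 * α - 1)) -
            ((α * ((α - 1) * y ^ (α - 1 - 1))) * (1 - y ^ 2) +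
              (α * y ^ (α - 1)) * (-(2 * y ^ 1)))) y :=
        (d1.const_sub 1).sub ((d2.const_mul α).mul d3)
      rw [d.deriv]
      -- rewrite powers in terms of t = y ^ (α - 2)
      have ht : 0 < y ^ (α - 1 - 1) := Real.rpow_pos_of_pos hy0 _
      have e1 : y ^ (2 * α - 1) = y ^ (α - 1 - 1) * y ^ (α + 1) := by
        rw [← Real.rpow_add hy0]; ring_nf
      have e2 : y ^ (α - 1) = y ^ (α - 1 - 1) * y := by
        have e := Real.rpow_add_one hy0.ne' (α - 1 - 1)
        rw [show α - 1 - 1 + 1 = α - 1 by ring] at e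
        exact e
      have hk := k_pos α hα hy0 hy1
      rw [e1, e2]
      have hα0 : 0 < α := by linarith
      nlinarith [mul_pos (mul_pos hα0 ht) hk]
  have h1 := hanti ⟨hx0, hx1.le⟩ ⟨zero_lt_one, le_refl 1⟩ hx1
  simp only [Real.one_rpow, one_pow] at h1
  linarith

theorem stmt_10 (α : ℝ) (hα : 1 < α) :
    (∀ l ∈ Set.Ico (0 : ℝ) 1,
        0 ≤ ((1 - l) / (1 + l)) * ((1 + l ^ α) / (1 - l ^ α))) ∧
    StrictAntiOn (fun l : ℝ => ((1 - l) / (1 + l)) * ((1 + l ^ α) / (1 - l ^ α)))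
      (Set.Ico 0 1) := by
  have hα0 : (0:ℝ) < α := by linarith
  have hfacts : ∀ l ∈ Set.Ico (0:ℝ) 1, l ^ α < 1 ∧ 0 ≤ l ^ α := by
    intro l hl
    constructor
    · calc l ^ α < 1 ^ α := Real.rpow_lt_rpow hl.1 hl.2 hα0
      _ = 1 := Real.one_rpow _
    · exact Real.rpow_nonneg hl.1 _
  constructor
  · intro l hl
    obtain ⟨hp1, hp0⟩ := hfacts l hl
    have h1 : (0:ℝ) ≤ 1 - l := by linarith [hl.2]
    have h2 : (0:ℝ) ≤ 1 + l := by linarith [hl.1]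
    have h3 : (0:ℝ) ≤ 1 + l ^ α := by linarith
    have h4 : (0:ℝ) ≤ 1 - l ^ α := by linarith
    positivity
  · apply strictAntiOn_of_deriv_neg (convex_Ico 0 1)
    · apply ContinuousOn.mul
      · apply ContinuousOn.div
        · exact continuousOn_const.sub continuousOn_id
        · exact continuousOn_const.add continuousOn_id
        · intro l hl; have := hl.1; positivity
      · apply ContinuousOn.div
        · exact continuousOn_const.add
            (continuousOn_id.rpow_const (fun y (hy : y ∈ Set.Ico (0:ℝ) 1) => Or.inr hα0.le))
        · exact continuousOn_const.sub
            (continuousOn_id.rpow_const (fun y (hy : y ∈ Set.Ico (0:ℝ) 1) => Or.inr hα0.le))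
        · intro l hl
          have := (hfacts l hl).1
          intro h; rw [sub_eq_zero] at h; exact absurd h.symm (ne_of_lt this)
    · intro x hx
      rw [interior_Ico] at hx
      have hx0 : 0 < x := hx.1
      have hx1 : x < 1 := hx.2
      obtain ⟨hp1, hp0⟩ := hfacts x ⟨hx0.le, hx1⟩
      have hd1 : (0:ℝ) < 1 + x := by linarith
      have hd2 : (0:ℝ) < 1 - x ^ α := by linarith
      -- derivative
      have dpow : HasDerivAt (fun l : ℝ => l ^ α) (α * x ^ (α - 1)) x :=
        Real.hasDerivAt_rpow_const (Or.inl hx0.ne')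
      have du : HasDerivAt (fun l : ℝ => (1 - l) / (1 + l))
          ((-1 * (1 + x) - (1 - x) * 1) / (1 + x) ^ 2) x := by
        exact ((hasDerivAt_id x).const_sub 1).div ((hasDerivAt_id x).const_add 1) hd1.ne'
      have dv : HasDerivAt (fun l : ℝ => (1 + l ^ α) / (1 - l ^ α))
          (((α * x ^ (α - 1)) * (1 - x ^ α) - (1 + x ^ α) * (-(α * x ^ (α - 1)))) /
            (1 - x ^ α) ^ 2) x :=
        (dpow.const_add 1).div (dpow.const_sub 1) hd2.ne'
      have df : HasDerivAt (fun l : ℝ => (1 - l) / (1 + l) * ((1 + l ^ α) / (1 - l ^ α))) _ x := du.mul dv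
      rw [df.deriv]
      have hkey := h_pos α hα hx0 hx1
      have e2a : x ^ (2 * α) = x ^ α * x ^ α := by
        rw [two_mul, Real.rpow_add hx0]
      have epow : x ^ (α - 1) * x = x ^ α := by
        have e := Real.rpow_add_one hx0.ne' (α - 1)
        rw [show α - 1 + 1 = α by ring] at e
        linarith [e]
      rw [e2a] at hkey
      have hq : ((-1 * (1 + x) - (1 - x) * 1) / (1 + x) ^ 2) * ((1 + x ^ α) / (1 - x ^ α)) +
          ((1 - x) / (1 + x)) *
            (((α * x ^ (α - 1)) * (1 - x ^ α) - (1 + x ^ α) * (-(α * x ^ (α - 1)))) /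
              (1 - x ^ α) ^ 2)
          = (-2 * (1 - x ^ α * x ^ α - α * x ^ (α - 1) * (1 - x ^ 2))) /
              ((1 + x) ^ 2 * (1 - x ^ α) ^ 2) := by
        field_simp
        nlinarith [epow, sq_nonneg x]
      rw [hq]
      apply div_neg_of_neg_of_pos
      · nlinarith
      · positivity
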